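/- For real a and real β > 0, ∫₀^∞ (sin(a x)/cosh(β x)) · dx/x = 2·arctan(e^{π a/(2β)}) − π/2. -/

import Mathlib

open Real MeasureTheory Set

lemma even_integrableOn {f : ℝ → ℝ} (hev : ∀ x, f (-x) = f x)
    (h : IntegrableOn f (Ioi 0)) : Integrable f := by
  have A : MeasurableEmbedding fun x : ℝ => -x :=
    (Homeomorph.neg ℝ).isClosedEmbedding.measurableEmbedding
  have hIic : IntegrableOn f (Iic 0) := by
    rw [IntegrableOn, ← Measure.map_neg_eq_self (volume : Measure ℝ),
      Measure.restrict_map A.measurable measurableSet_Iic, A.integrable_map_iff]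
    have : (fun x : ℝ => -x) ⁻¹' (Iic 0) = Ici 0 := by
      ext x; simp [neg_le]
    rw [this]
    have : IntegrableOn (f ∘ fun x : ℝ => -x) (Ici 0) ↔ IntegrableOn f (Ici 0) := by
      apply integrable_congr
      exact Filter.Eventually.of_forall fun x => by simp [Function.comp, hev]
    exact this.mpr ((integrableOn_Ici_iff_integrableOn_Ioi).mpr h)
  have := hIic.union h
  rw [← integrableOn_univ, ← Iic_union_Ioi (a := (0:ℝ))]
  exact this

lemma sech_integrable {β : ℝ} (hβ : 0 < β) :
    Integrable (fun x : ℝ => (Real.cosh (β * x))⁻¹) := by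
  apply even_integrableOn (fun x => by simp)
  have hbound : ∀ x ∈ Ioi (0:ℝ), ‖(Real.cosh (β * x))⁻¹‖ ≤ 2 * Real.exp (-β * x) := by
    intro x _
    have h1 : Real.exp (β * x) / 2 ≤ Real.cosh (β * x) := by
      have h2 : (0:ℝ) < Real.exp (-(β * x)) := Real.exp_pos _
      rw [Real.cosh_eq]; linarith
    rw [norm_inv, Real.norm_eq_abs, abs_of_pos (Real.cosh_pos _),
      show -β * x = -(β * x) by ring, Real.exp_neg]
    rw [inv_le_comm₀ (Real.cosh_pos _) (by positivity)]
    calc (2 * (Real.exp (β * x))⁻¹)⁻¹ = Real.exp (β * x) / 2 := by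
          rw [mul_inv, inv_inv]; ring
      _ ≤ _ := h1
  have hint : IntegrableOn (fun x : ℝ => 2 * Real.exp (-β * x)) (Ioi 0) :=
    (exp_neg_integrableOn_Ioi 0 hβ).const_mul 2
  have hcont : Continuous fun x : ℝ => (Real.cosh (β * x))⁻¹ :=
    (Real.continuous_cosh.comp (continuous_const.mul continuous_id)).inv₀
      (fun x => (Real.cosh_pos _).ne')
  exact hint.mono' (hcont.continuousOn.aestronglyMeasurable measurableSet_Ioi)
    ((ae_restrict_iff' measurableSet_Ioi).2 (Filter.Eventually.of_forall hbound))

lemma beta_Ioi {s : ℂ} (h1 : 0 < s.re) (h2 : s.re < 1) :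
    ∫ u in Ioi (0:ℝ), (u:ℂ) ^ (s-1) / (1 + (u:ℂ)) = ↑π / Complex.sin (↑π * s) := by
  have key : Complex.betaIntegral s (1-s) = ↑π / Complex.sin (↑π * s) := by
    have hb := Complex.Gamma_mul_Gamma_eq_betaIntegral (t := 1-s) h1
      (by rw [Complex.sub_re, Complex.one_re]; linarith)
    rw [show s + (1-s) = 1 by ring, Complex.Gamma_one, one_mul] at hb
    rw [← hb, Complex.Gamma_mul_Gamma_one_sub]
  rw [← key, Complex.betaIntegral,
    intervalIntegral.integral_of_le zero_le_one, integral_Ioc_eq_integral_Ioo]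
  -- substitution u = t/(1-t)
  have himg : Ioi (0:ℝ) = (fun t : ℝ => t / (1-t)) '' Ioo 0 1 := by
    ext u
    constructor
    · intro hu
      have hu0 : (0:ℝ) < u := mem_Ioi.mp hu
      refine ⟨u / (1+u), ⟨by positivity, ?_⟩, ?_⟩
      · rw [div_lt_one (by positivity)]; linarith
      · have h1u : (0:ℝ) < 1 + u := by linarith
        field_simp
        ring
    · rintro ⟨t, ⟨ht0, ht1⟩, rfl⟩
      have : (0:ℝ) < 1 - t := by linarith
      exact mem_Ioi.mpr (by positivity)
  rw [himg]
  rw [integral_image_eq_integral_abs_deriv_smul measurableSet_Ioo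
      (f' := fun t => ((1-t)^2)⁻¹) ?hderiv ?hinj]
  case hderiv =>
    intro t ht
    have ht1 : 1 - t ≠ 0 := by have := ht.2; intro h; simp only [sub_eq_zero] at h; linarith
    have := ((hasDerivAt_id t).div ((hasDerivAt_id t).const_sub 1) ht1)
    refine this.hasDerivWithinAt.congr_deriv ?_
    simp only [id]; rw [← one_div]; congr 1; ring
  case hinj =>
    intro x hx y hy hxy
    have hx1 : 1 - x ≠ 0 := by have := hx.2; intro h; simp only [sub_eq_zero] at h; linarith
    have hy1 : 1 - y ≠ 0 := by have := hy.2; intro h; simp only [sub_eq_zero] at h; linarith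
    field_simp at hxy
    linarith
  refine setIntegral_congr_fun measurableSet_Ioo (fun t ht => ?_)
  obtain ⟨ht0, ht1⟩ := ht
  have h1t : (0:ℝ) < 1 - t := by linarith
  have hz : ((1:ℂ) - t) ≠ 0 := by
    simpa using Complex.ofReal_ne_zero.mpr h1t.ne'
  -- compute the smul
  have hplus : (1:ℂ) + ↑(t/(1-t)) = ((1-t:ℝ):ℂ)⁻¹ := by
    rw [← Complex.ofReal_inv]
    push_cast
    field_simp
    ring
  have hpow : ((t/(1-t) : ℝ):ℂ) ^ (s-1) = (t:ℂ)^(s-1) * (((1-t:ℝ):ℂ)^(s-1))⁻¹ := by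
    rw [div_eq_mul_inv, Complex.ofReal_mul, Complex.mul_cpow_ofReal_nonneg ht0.le (by positivity),
      Complex.ofReal_inv, Complex.inv_cpow]
    rw [Complex.arg_ofReal_of_nonneg h1t.le]
    exact pi_ne_zero.symm
  rw [show (1 - s - 1 : ℂ) = -s from by ring]
  rw [Complex.real_smul, hpow, hplus]
  push_cast
  rw [abs_of_pos (by positivity)]
  have e1 : ((1:ℂ)-t) ^ (-s) = (((1:ℂ)-t) ^ s)⁻¹ := Complex.cpow_neg _ _
  have e2 : ((1:ℂ)-t) ^ (s-1) = ((1:ℂ)-t) ^ s / ((1:ℂ)-t) := by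
    rw [Complex.cpow_sub _ _ hz, Complex.cpow_one]
  have hzs : ((1:ℂ)-t) ^ s ≠ 0 := by
    intro h
    exact hz (Complex.cpow_eq_zero_iff _ _ |>.mp h).1
  rw [e1, e2]
  field_simp
  push_cast; field_simp

lemma cpow_real_exp (r : ℝ) (w : ℂ) : ((Real.exp r : ℝ) : ℂ) ^ w = Complex.exp (r * w) := by
  rw [Complex.cpow_def_of_ne_zero (by exact_mod_cast (Real.exp_pos r).ne')]
  rw [← Complex.ofReal_log (Real.exp_pos r).le, Real.log_exp]

lemma cexp_over_cosh {β : ℝ} (hβ : 0 < β) (t : ℝ) :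
    ∫ x : ℝ, Complex.exp ((t*x : ℝ) * Complex.I) / (Real.cosh (β*x) : ℂ) =
      (π : ℂ) / (β * (Real.cosh (π*t/(2*β)) : ℂ)) := by
  set s : ℂ := 1/2 + ((t/(2*β) : ℝ) : ℂ) * Complex.I with hs
  have hsre : s.re = 1/2 := by
    rw [hs, Complex.add_re, Complex.mul_re, Complex.I_re, Complex.I_im, Complex.ofReal_re,
      Complex.ofReal_im]
    norm_num
  have hbeta := beta_Ioi (s := s) (by rw [hsre]; norm_num) (by rw [hsre]; norm_num)
  -- substitution u = exp (2βx)
  have himg : Ioi (0:ℝ) = (fun x : ℝ => Real.exp (2*β*x)) '' univ := by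
    ext u
    simp only [image_univ, mem_range, mem_Ioi]
    constructor
    · intro hu
      exact ⟨Real.log u / (2*β), by rw [mul_div_cancel₀ _ (by positivity), Real.exp_log hu]⟩
    · rintro ⟨x, rfl⟩; exact Real.exp_pos _
  have hd : ∀ x ∈ univ, HasDerivWithinAt (fun x : ℝ => Real.exp (2*β*x))
      (2*β*Real.exp (2*β*x)) univ x := by
    intro x _
    have h1 : HasDerivAt (fun x : ℝ => 2*β*x) (2*β) x := by
      have h0 := (hasDerivAt_id x).const_mul (2*β)
      rw [mul_one] at h0
      exact h0
    have h2 := h1.exp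
    have hcomm : Real.exp (2*β*x) * (2*β) = 2*β*Real.exp (2*β*x) := mul_comm _ _
    rw [hcomm] at h2
    exact h2.hasDerivWithinAt
  have hinj : InjOn (fun x : ℝ => Real.exp (2*β*x)) univ := by
    intro x _ y _ hxy
    simp only at hxy
    have := Real.exp_injective hxy
    have h2β : (2*β) ≠ 0 := by positivity
    exact mul_left_cancel₀ h2β this
  rw [himg, integral_image_eq_integral_abs_deriv_smul MeasurableSet.univ hd hinj] at hbeta
  rw [Measure.restrict_univ] at hbeta
  have hpoint : ∀ x : ℝ,
      |2*β*Real.exp (2*β*x)| • (((Real.exp (2*β*x) : ℝ) : ℂ) ^ (s-1) / (1 + ((Real.exp (2*β*x) : ℝ) : ℂ)))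
        = β * (Complex.exp ((t*x : ℝ) * Complex.I) / (Real.cosh (β*x) : ℂ)) := by
    intro x
    have habs : |2*β*Real.exp (2*β*x)| = 2*β*Real.exp (2*β*x) := abs_of_pos (by positivity)
    rw [habs, cpow_real_exp, Complex.real_smul]
    have hden : (1 : ℂ) + ((Real.exp (2*β*x) : ℝ) : ℂ)
        = (Real.exp (β*x) : ℂ) * (2 * (Real.cosh (β*x) : ℂ)) := by
      have : (1 : ℝ) + Real.exp (2*β*x) = Real.exp (β*x) * (2 * Real.cosh (β*x)) := by
        rw [Real.cosh_eq, show 2*β*x = β*x + β*x by ring, Real.exp_add]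
        field_simp [Real.exp_neg]
        rw [mul_add, ← Real.exp_add (β*x) (-(β*x)), add_neg_cancel, Real.exp_zero]; ring
      exact_mod_cast congrArg (fun y : ℝ => (y : ℂ)) this
    have hexp : Complex.exp ((2*β*x : ℝ) * (s-1))
        = Complex.exp ((t*x : ℝ) * Complex.I) / (Real.exp (β*x) : ℂ) := by
      rw [show ((2*β*x : ℝ) : ℂ) * (s-1) = ((t*x : ℝ) : ℂ) * Complex.I - ((β*x : ℝ) : ℂ) by
        rw [hs]
        have hβc : (β:ℂ) ≠ 0 := by exact_mod_cast hβ.ne'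
        push_cast
        field_simp
        ring]
      rw [Complex.exp_sub, Complex.ofReal_exp]
    rw [hexp, hden]
    have e1 : ((Real.exp (β*x)) : ℂ) ≠ 0 := by exact_mod_cast (Real.exp_pos _).ne'
    have e2 : ((Real.cosh (β*x)) : ℂ) ≠ 0 := by exact_mod_cast (Real.cosh_pos (x := β*x)).ne'
    have e3 : ((Real.exp (2*β*x) : ℝ) : ℂ) = (Real.exp (β*x) : ℂ) * (Real.exp (β*x) : ℂ) := by
      rw [← Complex.ofReal_mul, ← Real.exp_add]
      norm_cast
      ring_nf
    rw [show ((2*β*Real.exp (2*β*x) : ℝ) : ℂ) = 2*(β:ℂ)*((Real.exp (2*β*x) : ℝ) : ℂ) from by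
      push_cast; ring]
    rw [e3]
    have e2' : Complex.cosh ((β:ℂ)*(x:ℂ)) ≠ 0 := by
      rw [← Complex.ofReal_mul, ← Complex.ofReal_cosh]; exact e2
    field_simp [Complex.exp_ne_zero, e2']
  simp_rw [hpoint] at hbeta
  rw [MeasureTheory.integral_const_mul] at hbeta
  have hsin : Complex.sin (↑π * s) = (Real.cosh (π*t/(2*β)) : ℂ) := by
    rw [hs, show (↑π : ℂ) * (1/2 + ((t/(2*β) : ℝ) : ℂ) * Complex.I)
        = ((π/2 : ℝ) : ℂ) + ((π*t/(2*β) : ℝ) : ℂ) * Complex.I by push_cast; ring]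
    rw [Complex.sin_add, Complex.cos_mul_I, Complex.sin_mul_I]
    rw [← Complex.ofReal_sin, ← Complex.ofReal_cos, Real.sin_pi_div_two, Real.cos_pi_div_two]
    rw [Complex.ofReal_cosh]
    simp
  rw [hsin] at hbeta
  have hβc : (β:ℂ) ≠ 0 := by exact_mod_cast hβ.ne'
  have hc : ((Real.cosh (π*t/(2*β)) : ℝ) : ℂ) ≠ 0 := by
    exact_mod_cast (Real.cosh_pos (x := π*t/(2*β))).ne'
  rw [eq_div_iff (mul_ne_zero hβc hc),
    show (∫ x : ℝ, Complex.exp ((t*x : ℝ) * Complex.I) / (Real.cosh (β*x) : ℂ))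
        * ((β:ℂ) * (Real.cosh (π*t/(2*β)) : ℂ))
      = ((β:ℂ) * ∫ x : ℝ, Complex.exp ((t*x : ℝ) * Complex.I) / (Real.cosh (β*x) : ℂ))
        * (Real.cosh (π*t/(2*β)) : ℂ) from by ring,
    hbeta, div_mul_cancel₀ _ hc]

lemma cos_over_cosh {β : ℝ} (hβ : 0 < β) (t : ℝ) :
    ∫ x in Ioi (0:ℝ), Real.cos (t*x) / Real.cosh (β*x)
      = π / (2*β*Real.cosh (π*t/(2*β))) := by
  have hcoshne : ∀ x : ℝ, ((Real.cosh (β*x) : ℝ) : ℂ) ≠ 0 :=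
    fun x => by exact_mod_cast (Real.cosh_pos (x := β*x)).ne'
  have hint : Integrable (fun x : ℝ => Complex.exp ((t*x:ℝ)*Complex.I) / (Real.cosh (β*x) : ℂ)) := by
    apply (sech_integrable hβ).mono'
    · apply Continuous.aestronglyMeasurable
      apply Continuous.div
      · exact Complex.continuous_exp.comp (by continuity)
      · exact Complex.continuous_ofReal.comp (Real.continuous_cosh.comp (by continuity))
      · exact hcoshne
    · refine Filter.Eventually.of_forall fun x => ?_
      rw [norm_div, Complex.norm_exp_ofReal_mul_I,
        Complex.norm_real, Real.norm_eq_abs, abs_of_pos (Real.cosh_pos _)]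
      rw [one_div]
  have hre : ∫ x : ℝ, Real.cos (t*x) / Real.cosh (β*x) = π/(β*Real.cosh (π*t/(2*β))) := by
    have h := integral_re hint
    rw [cexp_over_cosh hβ t] at h
    rw [show ((π:ℂ) / ((β:ℂ) * (Real.cosh (π*t/(2*β)) : ℂ))) = ((π/(β*Real.cosh (π*t/(2*β))) : ℝ) : ℂ)
      from by push_cast; ring] at h
    simp only [RCLike.re_to_complex, Complex.ofReal_re] at h
    rw [← h]
    congr 1
    ext x
    rw [Complex.div_ofReal_re, Complex.exp_ofReal_mul_I_re]
  have hrint : Integrable (fun x : ℝ => Real.cos (t*x) / Real.cosh (β*x)) := by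
    have := hint.re
    refine this.congr (Filter.Eventually.of_forall fun x => ?_)
    simp only [RCLike.re_to_complex, Complex.div_ofReal_re, Complex.exp_ofReal_mul_I_re]
  have hsplit := intervalIntegral.integral_Iic_add_Ioi (b := (0:ℝ)) hrint.integrableOn hrint.integrableOn
  have hflip : ∫ x in Iic (0:ℝ), Real.cos (t*x) / Real.cosh (β*x)
      = ∫ x in Ioi (0:ℝ), Real.cos (t*x) / Real.cosh (β*x) := by
    rw [show Iic (0:ℝ) = Iic (-0) from by norm_num, ← integral_comp_neg_Ioi]
    congr 1
    ext x
    simp [mul_neg, Real.cos_neg, Real.cosh_neg]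
  rw [hflip] at hsplit
  rw [hre] at hsplit
  have hc := Real.cosh_pos (x := π*t/(2*β))
  rw [show π / (2*β*Real.cosh (π*t/(2*β))) = (π/(β*Real.cosh (π*t/(2*β))))/2 from by
    rw [div_div]; congr 1; ring]
  linarith

lemma ftc_part {β : ℝ} (hβ : 0 < β) (a : ℝ) :
    ∫ t in (0:ℝ)..a, π / (2*β*Real.cosh (π*t/(2*β)))
      = 2 * Real.arctan (Real.exp (π * a / (2 * β))) - π / 2 := by
  have hderiv : ∀ t ∈ Set.uIcc (0:ℝ) a,
      HasDerivAt (fun y : ℝ => 2 * Real.arctan (Real.exp (π*y/(2*β))))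
        (π / (2*β*Real.cosh (π*t/(2*β)))) t := by
    intro t _
    have h1 : HasDerivAt (fun y : ℝ => π*y/(2*β)) (π/(2*β)) t := by
      have h0 := ((hasDerivAt_id t).const_mul π).div_const (2*β)
      simpa using h0
    have h2 := h1.exp
    have h3 := h2.arctan
    have h4 := h3.const_mul 2
    refine h4.congr_deriv ?_
    have he := Real.exp_pos (π*t/(2*β))
    rw [Real.cosh_eq, Real.exp_neg]
    field_simp
    ring
  rw [intervalIntegral.integral_eq_sub_of_hasDerivAt hderiv
    (Continuous.intervalIntegrable (by
      apply Continuous.div continuous_const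
      · exact (continuous_const.mul (Real.continuous_cosh.comp (by continuity)))
      · intro t
        have := Real.cosh_pos (x := π*t/(2*β))
        positivity) _ _)]
  norm_num [Real.arctan_one]
  ring

theorem stmt_5 (a β : ℝ) (hβ : 0 < β) :
    ∫ x in Set.Ioi (0:ℝ), (Real.sin (a * x) / Real.cosh (β * x)) / x =
      2 * Real.arctan (Real.exp (π * a / (2 * β))) - π / 2 := by
  -- main case a ≥ 0
  have main : ∀ a : ℝ, 0 ≤ a →
      ∫ x in Set.Ioi (0:ℝ), (Real.sin (a * x) / Real.cosh (β * x)) / x =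
        2 * Real.arctan (Real.exp (π * a / (2 * β))) - π / 2 := by
    intro a ha
    have step1 : ∫ x in Ioi (0:ℝ), (Real.sin (a * x) / Real.cosh (β * x)) / x
        = ∫ x in Ioi (0:ℝ), ∫ t in Ioc (0:ℝ) a, Real.cos (t*x) / Real.cosh (β*x) := by
      refine setIntegral_congr_fun measurableSet_Ioi (fun x hx => ?_)
      have hx0 : (0:ℝ) < x := hx
      have hsin : ∫ t in Ioc (0:ℝ) a, Real.cos (t*x) = Real.sin (a*x) / x := by
        rw [← intervalIntegral.integral_of_le ha,
          intervalIntegral.integral_comp_mul_right Real.cos hx0.ne',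
          integral_cos]
        simp [smul_eq_mul]
        ring
      rw [integral_div, hsin, div_div, div_div, mul_comm (Real.cosh (β*x)) x]
    have swap : ∫ x in Ioi (0:ℝ), ∫ t in Ioc (0:ℝ) a, Real.cos (t*x) / Real.cosh (β*x)
        = ∫ t in Ioc (0:ℝ) a, ∫ x in Ioi (0:ℝ), Real.cos (t*x) / Real.cosh (β*x) := by
      apply MeasureTheory.integral_integral_swap
      have hbound : Integrable (fun p : ℝ × ℝ => (Real.cosh (β*p.1))⁻¹ * 1)
          ((volume.restrict (Ioi (0:ℝ))).prod (volume.restrict (Ioc (0:ℝ) a))) := by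
        have h1 : Integrable (fun _ : ℝ => (1:ℝ)) (volume.restrict (Ioc (0:ℝ) a)) := by
          rw [integrable_const_iff]
          right
          exact ⟨by simp [Real.volume_Ioc]⟩
        exact Integrable.mul_prod ((sech_integrable hβ).restrict) h1
      apply hbound.mono'
      · apply Continuous.aestronglyMeasurable
        apply Continuous.div
        · exact Real.continuous_cos.comp (continuous_snd.mul continuous_fst)
        · exact Real.continuous_cosh.comp (continuous_const.mul continuous_fst)
        · exact fun p => (Real.cosh_pos _).ne'
      · refine Filter.Eventually.of_forall fun p => ?_
        rw [Function.uncurry]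
        simp only [mul_one]
        rw [norm_div, Real.norm_eq_abs, Real.norm_eq_abs, abs_of_pos (Real.cosh_pos _)]
        rw [div_le_iff₀ (Real.cosh_pos _), inv_mul_cancel₀ (Real.cosh_pos _).ne']
        exact Real.abs_cos_le_one _
    have inner : ∀ t : ℝ, ∫ x in Ioi (0:ℝ), Real.cos (t*x) / Real.cosh (β*x)
        = π / (2*β*Real.cosh (π*t/(2*β))) := fun t => cos_over_cosh hβ t
    rw [step1, swap]
    simp_rw [inner]
    rw [← intervalIntegral.integral_of_le ha, ftc_part hβ a]
  rcases le_or_gt 0 a with ha | ha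
  · exact main a ha
  · have h1 := main (-a) (by linarith)
    have h2 : ∫ x in Set.Ioi (0:ℝ), (Real.sin (a * x) / Real.cosh (β * x)) / x
        = - ∫ x in Set.Ioi (0:ℝ), (Real.sin ((-a) * x) / Real.cosh (β * x)) / x := by
      rw [← integral_neg]
      refine setIntegral_congr_fun measurableSet_Ioi (fun x _ => ?_)
      simp [neg_mul, Real.sin_neg]
      ring
    rw [h2, h1]
    have hu : π * -a / (2*β) = -(π * a / (2*β)) := by ring
    rw [hu, Real.exp_neg, Real.arctan_inv_of_pos (Real.exp_pos _)]
    ring
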